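/- A finite simple graph G has an isolated vertex if and only if its boundary polynomial B(G;x,y) is divisible by (y+1) as a polynomial in ℤ[x,y]. Moreover, the multiplicity of the factor (y+1) in B(G;x,y) equals the number of isolated vertices of G. -/

import Mathlib

open Finset MvPolynomial

attribute [local instance] Classical.propDecidable

/-- The outer boundary of a vertex set `S`. -/
noncomputable def outerBoundary {V : Type*} [Fintype V] (G : SimpleGraph V) (S : Finset V) :
    Finset V :=
  Finset.univ.filter (fun v => v ∉ S ∧ ∃ u ∈ S, G.Adj u v)

/-- The boundary polynomial `B(G;x,y)` with `x = X 0`, `y = X 1`. -/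
noncomputable def boundaryPoly {V : Type*} [Fintype V] (G : SimpleGraph V) :
    MvPolynomial (Fin 2) ℤ :=
  ∑ S : Finset V, X 0 ^ (outerBoundary G S).card * X 1 ^ S.card

section Aux

variable {V : Type*} [Fintype V] (G : SimpleGraph V)

lemma mem_outerBoundary {S : Finset V} {v : V} :
    v ∈ outerBoundary G S ↔ v ∉ S ∧ ∃ u ∈ S, G.Adj u v := by
  simp [outerBoundary]

lemma outerBoundary_empty : outerBoundary G (∅ : Finset V) = ∅ := by
  ext v; simp [outerBoundary]

set_option linter.unusedSectionVars false

/-- Membership in an adjacency-closed set propagates along walks. -/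
lemma mem_of_walk {s : Finset V} (hcl : ∀ x ∈ s, ∀ y, G.Adj x y → y ∈ s)
    {u w : V} (p : G.Walk u w) (hu : u ∈ s) : w ∈ s := by
  revert hu
  induction p with
  | nil => exact fun hu => hu
  | cons h q ih => exact fun hu => ih (hcl _ hu _ h)

lemma mem_of_reachable {s : Finset V} (hcl : ∀ x ∈ s, ∀ y, G.Adj x y → y ∈ s)
    {u w : V} (hu : u ∈ s) (h : G.Reachable u w) : w ∈ s := by
  obtain ⟨p⟩ := h
  exact mem_of_walk G hcl p hu

lemma outerBoundary_subset_closed {s : Finset V} (hcl : ∀ x ∈ s, ∀ y, G.Adj x y → y ∈ s)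
    {T : Finset V} (hT : T ⊆ s) : outerBoundary G T ⊆ s := by
  intro v hv
  rw [mem_outerBoundary] at hv
  obtain ⟨-, u, hu, hadj⟩ := hv
  exact hcl u (hT hu) v hadj

lemma outerBoundary_closed {s : Finset V} (hcl : ∀ x ∈ s, ∀ y, G.Adj x y → y ∈ s) :
    outerBoundary G s = ∅ := by
  ext v
  simp only [mem_outerBoundary, Finset.notMem_empty, iff_false, not_and]
  rintro hv ⟨u, hu, hadj⟩
  exact hv (hcl u hu v hadj)

/-- Boundary of a union splits when the parts lie in disjoint adjacency-closed sets. -/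
lemma outerBoundary_union {Cs Ds a b : Finset V} (hdisj : Disjoint Cs Ds)
    (hC : ∀ x ∈ Cs, ∀ y, G.Adj x y → y ∈ Cs) (hD : ∀ x ∈ Ds, ∀ y, G.Adj x y → y ∈ Ds)
    (ha : a ⊆ Cs) (hb : b ⊆ Ds) :
    outerBoundary G (a ∪ b) = outerBoundary G a ∪ outerBoundary G b := by
  have hd := Finset.disjoint_left.1 hdisj
  ext v
  simp only [mem_outerBoundary, Finset.mem_union, not_or]
  constructor
  · rintro ⟨⟨hva, hvb⟩, u, hu | hu, hadj⟩
    · exact Or.inl ⟨hva, u, hu, hadj⟩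
    · exact Or.inr ⟨hvb, u, hu, hadj⟩
  · rintro (⟨hv, u, hu, hadj⟩ | ⟨hv, u, hu, hadj⟩)
    · have hvC : v ∈ Cs := hC u (ha hu) v hadj
      exact ⟨⟨hv, fun h' => hd hvC (hb h')⟩, u, Or.inl hu, hadj⟩
    · have hvD : v ∈ Ds := hD u (hb hu) v hadj
      exact ⟨⟨fun h' => hd (ha h') hvD, hv⟩, u, Or.inr hu, hadj⟩

lemma card_outerBoundary_union {Cs Ds a b : Finset V} (hdisj : Disjoint Cs Ds)
    (hC : ∀ x ∈ Cs, ∀ y, G.Adj x y → y ∈ Cs) (hD : ∀ x ∈ Ds, ∀ y, G.Adj x y → y ∈ Ds)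
    (ha : a ⊆ Cs) (hb : b ⊆ Ds) :
    (outerBoundary G (a ∪ b)).card = (outerBoundary G a).card + (outerBoundary G b).card := by
  rw [outerBoundary_union G hdisj hC hD ha hb]
  exact Finset.card_union_of_disjoint
    (hdisj.mono (outerBoundary_subset_closed G hC ha) (outerBoundary_subset_closed G hD hb))

end Aux

/-- Splitting a sum over the powerset of a disjoint union. -/
lemma sum_powerset_union {V : Type*} {R : Type*} [AddCommMonoid R] {A B : Finset V}
    (h : Disjoint A B) (f : Finset V → R) :
    ∑ T ∈ (A ∪ B).powerset, f T = ∑ a ∈ A.powerset, ∑ b ∈ B.powerset, f (a ∪ b) := by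
  classical
  have hd := Finset.disjoint_left.1 h
  have key : ∀ T ∈ (A ∪ B).powerset, (T ∩ A) ∪ (T ∩ B) = T := by
    intro T hT
    have hTA := Finset.mem_powerset.1 hT
    ext x
    simp only [Finset.mem_union, Finset.mem_inter]
    constructor
    · rintro (⟨h1, _⟩ | ⟨h1, _⟩) <;> exact h1
    · intro hx
      rcases Finset.mem_union.1 (hTA hx) with h' | h'
      · exact Or.inl ⟨hx, h'⟩
      · exact Or.inr ⟨hx, h'⟩
  rw [← Finset.sum_product']
  refine Finset.sum_nbij' (fun T => (T ∩ A, T ∩ B)) (fun p => p.1 ∪ p.2) ?_ ?_ ?_ ?_ ?_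
  · intro T hT
    simp only [Finset.mem_product, Finset.mem_powerset]
    exact ⟨Finset.inter_subset_right, Finset.inter_subset_right⟩
  · intro p hp
    simp only [Finset.mem_product, Finset.mem_powerset] at hp
    exact Finset.mem_powerset.2 (Finset.union_subset_union hp.1 hp.2)
  · intro T hT
    exact key T hT
  · intro p hp
    simp only [Finset.mem_product, Finset.mem_powerset] at hp
    have e1 : (p.1 ∪ p.2) ∩ A = p.1 := by
      ext x
      simp only [Finset.mem_inter, Finset.mem_union]
      constructor
      · rintro ⟨h1 | h1, h2⟩
        · exact h1
        · exact absurd (hp.2 h1) (fun hB => hd h2 hB)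
      · intro h1
        exact ⟨Or.inl h1, hp.1 h1⟩
    have e2 : (p.1 ∪ p.2) ∩ B = p.2 := by
      ext x
      simp only [Finset.mem_inter, Finset.mem_union]
      constructor
      · rintro ⟨h1 | h1, h2⟩
        · exact absurd h2 (hd (hp.1 h1))
        · exact h1
      · intro h1
        exact ⟨Or.inr h1, hp.2 h1⟩
    exact Prod.ext e1 e2
  · intro T hT
    rw [key T hT]

section Connected

variable {V : Type*} [Fintype V] (G : SimpleGraph V)

set_option linter.unusedSectionVars false

lemma outerBoundary_symmDiff_subset {w : V} {T1 T2 : Finset V}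
    (h1 : w ∉ T1) (h2 : w ∉ T2)
    (hb1 : outerBoundary G T1 ⊆ {w}) (hb2 : outerBoundary G T2 ⊆ {w}) :
    outerBoundary G (symmDiff T1 T2) ⊆ {w} := by
  intro x hx
  rw [mem_outerBoundary] at hx
  obtain ⟨hxn, u, hu, hadj⟩ := hx
  rw [Finset.mem_symmDiff] at hu
  have hxiff : x ∈ T1 ↔ x ∈ T2 := by
    constructor
    · intro h; by_contra h'; exact hxn (Finset.mem_symmDiff.2 (Or.inl ⟨h, h'⟩))
    · intro h; by_contra h'; exact hxn (Finset.mem_symmDiff.2 (Or.inr ⟨h, h'⟩))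
  rcases hu with ⟨hu1, hu2⟩ | ⟨hu2, hu1⟩
  · by_cases hx1 : x ∈ T1
    · have hx2 : x ∈ T2 := hxiff.1 hx1
      have : u ∈ outerBoundary G T2 := (mem_outerBoundary G).2 ⟨hu2, x, hx2, hadj.symm⟩
      have := Finset.mem_singleton.1 (hb2 this)
      exact absurd (this ▸ hu1) h1
    · exact hb1 ((mem_outerBoundary G).2 ⟨hx1, u, hu1, hadj⟩)
  · by_cases hx2 : x ∈ T2
    · have hx1 : x ∈ T1 := hxiff.2 hx2
      have : u ∈ outerBoundary G T1 := (mem_outerBoundary G).2 ⟨hu1, x, hx1, hadj.symm⟩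
      have := Finset.mem_singleton.1 (hb1 this)
      exact absurd (this ▸ hu2) h2
    · exact hb2 ((mem_outerBoundary G).2 ⟨hx2, u, hu2, hadj⟩)

lemma boundary_empty_class {C : Finset V} {v : V} (hv : v ∈ C)
    (hC : ∀ x ∈ C, ∀ y, G.Adj x y → y ∈ C)
    (hreach : ∀ w ∈ C, G.Reachable v w)
    {T : Finset V} (hT : T ⊆ C) (hbd : outerBoundary G T = ∅) :
    T = ∅ ∨ T = C := by
  by_cases hTe : T = ∅
  · exact Or.inl hTe
  right
  obtain ⟨u, hu⟩ := Finset.nonempty_iff_ne_empty.2 hTe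
  have hTcl : ∀ x ∈ T, ∀ y, G.Adj x y → y ∈ T := by
    intro x hx y hadj
    by_contra hyn
    have : y ∈ outerBoundary G T := (mem_outerBoundary G).2 ⟨hyn, x, hx, hadj⟩
    simp [hbd] at this
  refine Finset.Subset.antisymm hT (fun w hw => ?_)
  exact mem_of_reachable G hTcl hu (((hreach u (hT hu)).symm).trans (hreach w hw))

lemma even_card_F {C : Finset V} {w : V}
    (hw : w ∈ C) (hC : ∀ x ∈ C, ∀ y, G.Adj x y → y ∈ C)
    (hnb : ∃ y, G.Adj w y) :
    Even ((C.powerset.filter (fun T => w ∉ T ∧ outerBoundary G T ⊆ {w})).card) := by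
  classical
  set F := C.powerset.filter (fun T => w ∉ T ∧ outerBoundary G T ⊆ {w}) with hF
  obtain ⟨y, hy⟩ := hnb
  have hyC : y ∈ C := hC w hw y hy
  have hyw : y ≠ w := fun h => G.loopless.irrefl w (h ▸ hy)
  have hene : C.erase w ≠ ∅ := by
    intro h
    have : y ∈ C.erase w := Finset.mem_erase.2 ⟨hyw, hyC⟩
    simp [h] at this
  have hwe : w ∉ C.erase w := Finset.notMem_erase w C
  have hbe : outerBoundary G (C.erase w) ⊆ {w} := by
    intro x hx
    rw [mem_outerBoundary] at hx
    obtain ⟨hxn, u, hu, hadj⟩ := hx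
    have hxC : x ∈ C := hC u (Finset.erase_subset _ _ hu) x hadj
    rw [Finset.mem_singleton]
    by_contra hxw
    exact hxn (Finset.mem_erase.2 ⟨hxw, hxC⟩)
  have hstep : ∀ T ∈ F, symmDiff T (C.erase w) ∈ F := by
    intro T hT
    rw [hF, Finset.mem_filter, Finset.mem_powerset] at hT ⊢
    obtain ⟨hTC, hwT, hbT⟩ := hT
    refine ⟨?_, ?_, outerBoundary_symmDiff_subset G hwT hwe hbT hbe⟩
    · intro x hx
      rcases Finset.mem_symmDiff.1 hx with ⟨h1, _⟩ | ⟨h1, _⟩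
      · exact hTC h1
      · exact Finset.erase_subset _ _ h1
    · intro hcon
      rcases Finset.mem_symmDiff.1 hcon with ⟨h1, _⟩ | ⟨h1, _⟩
      · exact hwT h1
      · exact hwe h1
  have hsum : ∑ _T ∈ F, (1 : ZMod 2) = 0 := by
    refine Finset.sum_involution (fun T _hT => symmDiff T (C.erase w)) ?_ ?_ ?_ ?_
    · intro a _ha; decide
    · intro a _ha _h1
      intro hcon
      exact hene (Finset.bot_eq_empty (α := V) ▸ symmDiff_eq_left.1 hcon)
    · exact hstep
    · intro a _ha
      exact symmDiff_symmDiff_cancel_right (C.erase w) a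
  rw [Finset.sum_const, nsmul_eq_mul, mul_one] at hsum
  exact even_iff_two_dvd.2 ((ZMod.natCast_eq_zero_iff F.card 2).1 hsum)

end Connected

section Parity

variable {V : Type*} [Fintype V] (G : SimpleGraph V)

set_option linter.unusedSectionVars false

lemma fiber_eq {C : Finset V} {v w : V} (hv : v ∈ C)
    (hC : ∀ x ∈ C, ∀ y, G.Adj x y → y ∈ C)
    (hreach : ∀ x ∈ C, G.Reachable v x) (hw : w ∈ C) :
    C.powerset.filter (fun T => outerBoundary G T = {w}) =
      (C.powerset.filter (fun T => w ∉ T ∧ outerBoundary G T ⊆ {w})).erase ∅ := by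
  ext T
  simp only [Finset.mem_filter, Finset.mem_erase, Finset.mem_powerset]
  constructor
  · rintro ⟨hTC, hbd⟩
    have hwB : w ∈ outerBoundary G T := by rw [hbd]; exact Finset.mem_singleton_self w
    rw [mem_outerBoundary] at hwB
    refine ⟨?_, hTC, hwB.1, by rw [hbd]⟩
    rintro rfl
    rw [outerBoundary_empty] at hbd
    exact (Finset.singleton_ne_empty w) hbd.symm
  · rintro ⟨hne, hTC, hwT, hsub⟩
    refine ⟨hTC, ?_⟩
    rcases Finset.subset_singleton_iff.1 hsub with h0 | h1
    · rcases boundary_empty_class G hv hC hreach hTC h0 with rfl | rfl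
      · exact absurd rfl hne
      · exact absurd hw hwT
    · exact h1

lemma card_nbone_parity {C : Finset V} {v : V} (hv : v ∈ C)
    (hC : ∀ x ∈ C, ∀ y, G.Adj x y → y ∈ C)
    (hreach : ∀ x ∈ C, G.Reachable v x)
    (hnbr : ∀ x ∈ C, ∃ y, G.Adj x y) :
    (2 : ℤ) ∣ ((C.powerset.filter (fun T => (outerBoundary G T).card = 1)).card : ℤ)
      - (C.card : ℤ) := by
  classical
  have hbu : C.powerset.filter (fun T => (outerBoundary G T).card = 1)
      = C.biUnion (fun w => C.powerset.filter (fun T => outerBoundary G T = {w})) := by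
    ext T
    simp only [Finset.mem_filter, Finset.mem_biUnion, Finset.mem_powerset]
    constructor
    · rintro ⟨hTC, hcard⟩
      obtain ⟨w, hwe⟩ := Finset.card_eq_one.1 hcard
      have hwC : w ∈ C := by
        have : w ∈ outerBoundary G T := hwe ▸ Finset.mem_singleton_self w
        exact outerBoundary_subset_closed G hC hTC this
      exact ⟨w, hwC, hTC, hwe⟩
    · rintro ⟨w, _hwC, hTC, hwe⟩
      exact ⟨hTC, by rw [hwe]; exact Finset.card_singleton w⟩
  have hdisj : ∀ x ∈ C, ∀ y ∈ C, x ≠ y →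
      Disjoint (C.powerset.filter (fun T => outerBoundary G T = {x}))
        (C.powerset.filter (fun T => outerBoundary G T = {y})) := by
    intro x _ y _ hxy
    rw [Finset.disjoint_left]
    rintro T hTx hTy
    rw [Finset.mem_filter] at hTx hTy
    exact hxy (Finset.singleton_injective (hTx.2 ▸ hTy.2))
  rw [hbu, Finset.card_biUnion hdisj]
  rw [Nat.cast_sum]
  have hCcard : (C.card : ℤ) = ∑ _w ∈ C, (1 : ℤ) := by simp
  rw [hCcard, ← Finset.sum_sub_distrib]
  refine Finset.dvd_sum ?_
  intro w hwC
  rw [fiber_eq G hv hC hreach hwC]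
  set F := C.powerset.filter (fun T => w ∉ T ∧ outerBoundary G T ⊆ {w}) with hF
  have hemem : (∅ : Finset V) ∈ F := by
    rw [hF, Finset.mem_filter, Finset.mem_powerset]
    refine ⟨Finset.empty_subset _, Finset.notMem_empty w, ?_⟩
    rw [outerBoundary_empty]
    exact Finset.empty_subset _
  rw [Finset.card_erase_of_mem hemem]
  obtain ⟨m, hm⟩ := even_card_F G hwC hC (hnbr w hwC)
  have hpos : 1 ≤ F.card := Finset.card_pos.2 ⟨∅, hemem⟩
  have : (F.card : ℤ) = 2 * m := by rw [hm]; push_cast; ring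
  have hcast : ((F.card - 1 : ℕ) : ℤ) = (F.card : ℤ) - 1 := by
    rw [Nat.cast_sub hpos]; simp
  rw [hcast, this]
  exact ⟨m - 1, by ring⟩

end Parity

section ConnSum

variable {V : Type*} [Fintype V] (G : SimpleGraph V)

set_option linter.unusedSectionVars false

lemma connected_sum {C : Finset V} {v : V} (hv : v ∈ C)
    (hC : ∀ x ∈ C, ∀ y, G.Adj x y → y ∈ C)
    (hreach : ∀ x ∈ C, G.Reachable v x)
    (hnbr : ∀ x ∈ C, ∃ y, G.Adj x y) :
    ∃ m : ℤ, ∑ T ∈ C.powerset, (-1 : ℤ) ^ T.card * 2 ^ (outerBoundary G T).card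
      = 2 + 4 * m := by
  classical
  set f : Finset V → ℤ := fun T => (-1 : ℤ) ^ T.card * 2 ^ (outerBoundary G T).card with hf
  set P := C.powerset with hP
  have hsplit1 := Finset.sum_filter_add_sum_filter_not P
    (fun T => (outerBoundary G T).card = 0) f
  have hsplit2 := Finset.sum_filter_add_sum_filter_not
    (P.filter (fun T => ¬ (outerBoundary G T).card = 0))
    (fun T => (outerBoundary G T).card = 1) f
  have hCne : (∅ : Finset V) ≠ C := by
    intro h
    rw [← h] at hv
    exact Finset.notMem_empty v hv
  have h0set : P.filter (fun T => (outerBoundary G T).card = 0) = {∅, C} := by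
    ext T
    simp only [Finset.mem_filter, Finset.mem_insert, Finset.mem_singleton, hP,
      Finset.mem_powerset]
    constructor
    · rintro ⟨hTC, hcard⟩
      exact boundary_empty_class G hv hC hreach hTC (Finset.card_eq_zero.1 hcard)
    · rintro (rfl | rfl)
      · exact ⟨Finset.empty_subset _, by rw [outerBoundary_empty]; simp⟩
      · exact ⟨Finset.Subset.refl _, by rw [outerBoundary_closed G hC]; simp⟩
  have h0 : ∑ T ∈ P.filter (fun T => (outerBoundary G T).card = 0), f T
      = 1 + (-1 : ℤ) ^ C.card := by
    rw [h0set, Finset.sum_pair hCne]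
    rw [hf]
    simp [outerBoundary_empty, outerBoundary_closed G hC]
  have h1set : (P.filter (fun T => ¬ (outerBoundary G T).card = 0)).filter
      (fun T => (outerBoundary G T).card = 1)
      = P.filter (fun T => (outerBoundary G T).card = 1) := by
    rw [Finset.filter_filter]
    apply Finset.filter_congr
    intro T _
    constructor
    · rintro ⟨_, h⟩; exact h
    · intro h; exact ⟨by omega, h⟩
  set N := P.filter (fun T => (outerBoundary G T).card = 1) with hN
  have h1 : ∑ T ∈ N, f T = 2 * ∑ T ∈ N, (-1 : ℤ) ^ T.card := by
    rw [Finset.mul_sum]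
    refine Finset.sum_congr rfl ?_
    intro T hT
    rw [hN, Finset.mem_filter] at hT
    rw [hf]
    simp only []
    rw [hT.2]
    ring
  have hA1 : ∃ z : ℤ, (∑ T ∈ N, (-1 : ℤ) ^ T.card) = (C.card : ℤ) + 2 * z := by
    have hAc : (2 : ℤ) ∣ (∑ T ∈ N, (-1 : ℤ) ^ T.card) - (N.card : ℤ) := by
      have hNc : (N.card : ℤ) = ∑ _T ∈ N, (1 : ℤ) := by simp
      rw [hNc, ← Finset.sum_sub_distrib]
      refine Finset.dvd_sum ?_
      intro T _
      rcases Nat.even_or_odd T.card with he | ho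
      · rw [he.neg_one_pow]; exact ⟨0, by ring⟩
      · rw [ho.neg_one_pow]; exact ⟨-1, by ring⟩
    have hcp := card_nbone_parity G hv hC hreach hnbr
    obtain ⟨z1, hz1⟩ := hAc
    obtain ⟨z2, hz2⟩ := hcp
    exact ⟨z1 + z2, by linarith⟩
  obtain ⟨z, hz⟩ := hA1
  have h2 : (4 : ℤ) ∣ ∑ T ∈ (P.filter (fun T => ¬ (outerBoundary G T).card = 0)).filter
      (fun T => ¬ (outerBoundary G T).card = 1), f T := by
    refine Finset.dvd_sum ?_
    intro T hT
    simp only [Finset.mem_filter] at hT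
    obtain ⟨d, hd⟩ : ∃ d, (outerBoundary G T).card = d + 2 :=
      ⟨(outerBoundary G T).card - 2, by omega⟩
    refine ⟨(-1 : ℤ) ^ T.card * 2 ^ d, ?_⟩
    rw [hf]
    simp only []
    rw [hd, pow_add]
    ring
  obtain ⟨m2, hm2⟩ := h2
  have htotal : ∑ T ∈ P, f T
      = (1 + (-1 : ℤ) ^ C.card) + 2 * ∑ T ∈ N, (-1 : ℤ) ^ T.card + 4 * m2 := by
    rw [← hsplit1, h0, ← hsplit2, h1set, h1, hm2]
    ring
  rcases Nat.even_or_odd C.card with he | ho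
  · have hpow : (-1 : ℤ) ^ C.card = 1 := he.neg_one_pow
    obtain ⟨j, hj⟩ := he
    have hjC : (C.card : ℤ) = (j : ℤ) + (j : ℤ) := by exact_mod_cast congrArg (Nat.cast : ℕ → ℤ) hj
    refine ⟨(j : ℤ) + z + m2, ?_⟩
    rw [htotal, hpow]
    linarith
  · have hpow : (-1 : ℤ) ^ C.card = -1 := ho.neg_one_pow
    obtain ⟨j, hj⟩ := ho
    have hjC : (C.card : ℤ) = 2 * (j : ℤ) + 1 := by exact_mod_cast congrArg (Nat.cast : ℕ → ℤ) hj
    refine ⟨(j : ℤ) + z + m2, ?_⟩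
    rw [htotal, hpow]
    linarith

end ConnSum

section MainSum

variable {V : Type*} [Fintype V] (G : SimpleGraph V)

set_option linter.unusedSectionVars false

lemma main_sum_ne_zero (U : Finset V) :
    (∀ x ∈ U, ∀ y, G.Adj x y → y ∈ U) → (∀ x ∈ U, ∃ y, G.Adj x y) →
    (∑ T ∈ U.powerset, (-1 : ℤ) ^ T.card * 2 ^ (outerBoundary G T).card) ≠ 0 := by
  classical
  induction U using Finset.strongInduction with
  | _ U ih =>
    intro hcl hnb
    by_cases hU : U = ∅
    · subst hU; simp
    obtain ⟨v, hv⟩ := Finset.nonempty_iff_ne_empty.2 hU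
    set C := U.filter (fun w => G.Reachable v w) with hCdef
    have hCU : C ⊆ U := Finset.filter_subset _ _
    have hvC : v ∈ C := Finset.mem_filter.2 ⟨hv, SimpleGraph.Reachable.refl v⟩
    have hCcl : ∀ x ∈ C, ∀ y, G.Adj x y → y ∈ C := by
      intro x hx y hadj
      rw [hCdef, Finset.mem_filter] at hx ⊢
      exact ⟨hcl x hx.1 y hadj, hx.2.trans hadj.reachable⟩
    have hDcl : ∀ x ∈ U \ C, ∀ y, G.Adj x y → y ∈ U \ C := by
      intro x hx y hadj
      rw [Finset.mem_sdiff] at hx ⊢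
      refine ⟨hcl x hx.1 y hadj, fun hyC => hx.2 ?_⟩
      rw [hCdef, Finset.mem_filter] at hyC ⊢
      exact ⟨hx.1, hyC.2.trans hadj.symm.reachable⟩
    have hdisj : Disjoint C (U \ C) := Finset.disjoint_sdiff
    have hUnion : C ∪ (U \ C) = U := Finset.union_sdiff_of_subset hCU
    have hsplit : ∑ T ∈ U.powerset, (-1 : ℤ) ^ T.card * 2 ^ (outerBoundary G T).card
        = (∑ a ∈ C.powerset, (-1 : ℤ) ^ a.card * 2 ^ (outerBoundary G a).card)
          * (∑ b ∈ (U \ C).powerset, (-1 : ℤ) ^ b.card * 2 ^ (outerBoundary G b).card) := by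
      nth_rewrite 1 [← hUnion]
      rw [sum_powerset_union hdisj, Finset.sum_mul_sum]
      refine Finset.sum_congr rfl fun a ha => Finset.sum_congr rfl fun b hb => ?_
      have haC := Finset.mem_powerset.1 ha
      have hbD := Finset.mem_powerset.1 hb
      rw [Finset.card_union_of_disjoint (hdisj.mono haC hbD),
        card_outerBoundary_union G hdisj hCcl hDcl haC hbD, pow_add, pow_add]
      ring
    rw [hsplit]
    have hreach : ∀ x ∈ C, G.Reachable v x := fun x hx => (Finset.mem_filter.1 hx).2
    have hnbrC : ∀ x ∈ C, ∃ y, G.Adj x y := fun x hx => hnb x (hCU hx)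
    refine mul_ne_zero ?_ ?_
    · obtain ⟨m, hm⟩ := connected_sum G hvC hCcl hreach hnbrC
      rw [hm]
      omega
    · have hss : U \ C ⊂ U := Finset.sdiff_ssubset hCU ⟨v, hvC⟩
      exact ih (U \ C) hss hDcl (fun x hx => hnb x (Finset.mem_sdiff.1 hx).1)

end MainSum

section Factor

variable {V : Type*} [Fintype V] (G : SimpleGraph V)

set_option linter.unusedSectionVars false

/-- The set of isolated vertices. -/
noncomputable def isolSet : Finset V :=
  Finset.univ.filter (fun v => ∀ u, ¬ G.Adj v u)

lemma isol_closed : ∀ x ∈ isolSet G, ∀ y, G.Adj x y → y ∈ isolSet G := by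
  intro x hx y hadj
  rw [isolSet, Finset.mem_filter] at hx
  exact absurd hadj (hx.2 y)

lemma nonisol_closed :
    ∀ x ∈ (Finset.univ \ isolSet G), ∀ y, G.Adj x y → y ∈ Finset.univ \ isolSet G := by
  intro x _hx y hadj
  rw [Finset.mem_sdiff]
  refine ⟨Finset.mem_univ y, fun hy => ?_⟩
  rw [isolSet, Finset.mem_filter] at hy
  exact hy.2 x hadj.symm

lemma bd_isol_zero {b : Finset V} (hb : b ⊆ isolSet G) : outerBoundary G b = ∅ := by
  ext x
  simp only [mem_outerBoundary, Finset.notMem_empty, iff_false, not_and]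
  rintro _hx ⟨u, hu, hadj⟩
  have := hb hu
  rw [isolSet, Finset.mem_filter] at this
  exact this.2 x hadj

lemma sum_pow_card {α R : Type*} [DecidableEq α] [CommRing R] (s : Finset α) (y : R) :
    ∑ t ∈ s.powerset, y ^ t.card = (y + 1) ^ s.card := by
  rw [← Finset.prod_const, Finset.prod_add]
  simp

lemma boundaryPoly_factor :
    boundaryPoly G = (X 1 + 1) ^ (isolSet G).card *
      ∑ a ∈ ((Finset.univ : Finset V) \ isolSet G).powerset,
        X 0 ^ (outerBoundary G a).card * X 1 ^ a.card := by
  classical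
  have hdisj : Disjoint ((Finset.univ : Finset V) \ isolSet G) (isolSet G) :=
    Finset.sdiff_disjoint
  have huniv : ((Finset.univ : Finset V) \ isolSet G) ∪ isolSet G = Finset.univ :=
    Finset.sdiff_union_of_subset (Finset.subset_univ _)
  have h1 : boundaryPoly G
      = ∑ T ∈ (((Finset.univ : Finset V) \ isolSet G) ∪ isolSet G).powerset,
          X 0 ^ (outerBoundary G T).card * X 1 ^ T.card := by
    rw [boundaryPoly, huniv, Finset.powerset_univ]
  rw [h1, sum_powerset_union hdisj]
  have h2 : ∀ a ∈ ((Finset.univ : Finset V) \ isolSet G).powerset,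
      ∀ b ∈ (isolSet G).powerset,
      (X 0 : MvPolynomial (Fin 2) ℤ) ^ (outerBoundary G (a ∪ b)).card * X 1 ^ (a ∪ b).card
        = (X 0 ^ (outerBoundary G a).card * X 1 ^ a.card) * X 1 ^ b.card := by
    intro a ha b hb
    have haA := Finset.mem_powerset.1 ha
    have hbB := Finset.mem_powerset.1 hb
    rw [Finset.card_union_of_disjoint (hdisj.mono haA hbB),
      card_outerBoundary_union G hdisj (nonisol_closed G) (isol_closed G) haA hbB,
      bd_isol_zero G hbB]
    simp only [Finset.card_empty, pow_add, pow_zero]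
    ring
  rw [Finset.sum_congr rfl fun a ha => Finset.sum_congr rfl fun b hb => h2 a ha b hb]
  rw [← Finset.sum_mul_sum, sum_pow_card, mul_comm]

end Factor

section Final

variable {V : Type*} [Fintype V] (G : SimpleGraph V)

set_option linter.unusedSectionVars false

noncomputable def evalPt : Fin 2 → ℤ := fun i => if i = 0 then 2 else -1

lemma evalPt_X0 : eval (evalPt) (X 0 : MvPolynomial (Fin 2) ℤ) = 2 := by
  simp [evalPt]

lemma evalPt_X1 : eval (evalPt) (X 1 : MvPolynomial (Fin 2) ℤ) = -1 := by
  simp [evalPt]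

lemma evalQ_ne_zero :
    eval evalPt (∑ a ∈ ((Finset.univ : Finset V) \ isolSet G).powerset,
      (X 0 : MvPolynomial (Fin 2) ℤ) ^ (outerBoundary G a).card * X 1 ^ a.card) ≠ 0 := by
  rw [map_sum]
  have heq : ∀ a ∈ ((Finset.univ : Finset V) \ isolSet G).powerset,
      eval evalPt ((X 0 : MvPolynomial (Fin 2) ℤ) ^ (outerBoundary G a).card * X 1 ^ a.card)
        = (-1 : ℤ) ^ a.card * 2 ^ (outerBoundary G a).card := by
    intro a _
    rw [map_mul, map_pow, map_pow, evalPt_X0, evalPt_X1]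
    ring
  rw [Finset.sum_congr rfl heq]
  refine main_sum_ne_zero G _ (nonisol_closed G) ?_
  intro x hx
  rw [Finset.mem_sdiff, isolSet, Finset.mem_filter] at hx
  have := hx.2
  push_neg at this
  simpa using this (Finset.mem_univ x)

lemma X1_add_one_ne_zero : (X 1 + 1 : MvPolynomial (Fin 2) ℤ) ≠ 0 := by
  intro h
  have := congrArg (eval (fun _ => (0 : ℤ))) h
  simp at this

theorem boundaryPoly_isolated_factor' :
    ((∃ v : V, ∀ u : V, ¬ G.Adj v u) ↔ ((X 1 : MvPolynomial (Fin 2) ℤ) + 1) ∣ boundaryPoly G) ∧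
    (((X 1 : MvPolynomial (Fin 2) ℤ) + 1) ^
        (Finset.univ.filter (fun v : V => ∀ u : V, ¬ G.Adj v u)).card ∣ boundaryPoly G ∧
      ¬ ((X 1 : MvPolynomial (Fin 2) ℤ) + 1) ^
        ((Finset.univ.filter (fun v : V => ∀ u : V, ¬ G.Adj v u)).card + 1) ∣ boundaryPoly G) := by
  classical
  have hIdef : Finset.univ.filter (fun v : V => ∀ u : V, ¬ G.Adj v u) = isolSet G := rfl
  set Q := ∑ a ∈ ((Finset.univ : Finset V) \ isolSet G).powerset,
    (X 0 : MvPolynomial (Fin 2) ℤ) ^ (outerBoundary G a).card * X 1 ^ a.card with hQ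
  have hfac := boundaryPoly_factor G
  rw [← hQ] at hfac
  have hQval : eval evalPt Q ≠ 0 := evalQ_ne_zero G
  have hdvd1 : ((X 1 : MvPolynomial (Fin 2) ℤ) + 1) ^ (isolSet G).card ∣ boundaryPoly G :=
    ⟨Q, hfac⟩
  have hnot : ¬ ((X 1 : MvPolynomial (Fin 2) ℤ) + 1) ^ ((isolSet G).card + 1) ∣
      boundaryPoly G := by
    rintro ⟨r, hr⟩
    have h2 : ((X 1 : MvPolynomial (Fin 2) ℤ) + 1) ^ (isolSet G).card * Q
        = ((X 1 : MvPolynomial (Fin 2) ℤ) + 1) ^ (isolSet G).card * ((X 1 + 1) * r) := by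
      rw [← hfac, hr, pow_succ]
      ring
    have hQeq : Q = ((X 1 : MvPolynomial (Fin 2) ℤ) + 1) * r :=
      mul_left_cancel₀ (pow_ne_zero _ (X1_add_one_ne_zero)) h2
    apply hQval
    rw [hQeq, map_mul, map_add, evalPt_X1]
    simp
  rw [hIdef]
  refine ⟨⟨?_, ?_⟩, hdvd1, hnot⟩
  · rintro ⟨v, hv⟩
    have hvI : v ∈ isolSet G := Finset.mem_filter.2 ⟨Finset.mem_univ v, hv⟩
    have hk : (isolSet G).card ≠ 0 := by
      intro h
      rw [Finset.card_eq_zero] at h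
      rw [h] at hvI
      exact Finset.notMem_empty v hvI
    exact dvd_trans (dvd_pow_self _ hk) hdvd1
  · intro hdvd
    by_contra hno
    push_neg at hno
    have hIempty : isolSet G = ∅ := by
      rw [isolSet, Finset.filter_eq_empty_iff]
      intro v _
      push_neg
      exact hno v
    have hBQ : boundaryPoly G = Q := by
      rw [hfac, hIempty]
      simp
    obtain ⟨r, hr⟩ := hdvd
    apply hQval
    rw [← hBQ, hr, map_mul, map_add, evalPt_X1]
    simp

end Final

/-- `G` has an isolated vertex iff `(y+1) ∣ B(G;x,y)`; and the multiplicity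
of the factor `(y+1)` equals the number of isolated vertices. -/
theorem boundaryPoly_isolated_factor {V : Type*} [Fintype V] (G : SimpleGraph V) :
    ((∃ v : V, ∀ u : V, ¬ G.Adj v u) ↔ ((X 1 : MvPolynomial (Fin 2) ℤ) + 1) ∣ boundaryPoly G) ∧
    (((X 1 : MvPolynomial (Fin 2) ℤ) + 1) ^
        (Finset.univ.filter (fun v : V => ∀ u : V, ¬ G.Adj v u)).card ∣ boundaryPoly G ∧
      ¬ ((X 1 : MvPolynomial (Fin 2) ℤ) + 1) ^
        ((Finset.univ.filter (fun v : V => ∀ u : V, ¬ G.Adj v u)).card + 1) ∣ boundaryPoly G) :=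
  boundaryPoly_isolated_factor' G
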